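/- For every quadratic polynomial p on an interval U of length 2h, the supremum norm is bounded by the scaled L¹ norm: sup_{x∈U} |p(x)| ≤ 8 h^{-1} ∫_U |p(x)| dx. -/

import Mathlib

open Set MeasureTheory

theorem stmt3 (p : Polynomial ℝ) (hp : p.natDegree ≤ 2) (a h : ℝ) (hh : 0 < h) :
    ∀ x ∈ Icc a (a + 2 * h),
      |p.eval x| ≤ 8 / h * ∫ t in Icc a (a + 2 * h), |p.eval t| := by
  have hU : a ≤ a + 2 * h := by linarith
  have hne : (Icc a (a + 2 * h)).Nonempty := nonempty_Icc.2 hU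
  have hpc : Continuous fun x : ℝ => p.eval x := p.continuous
  have hcont : Continuous fun x : ℝ => |p.eval x| := hpc.abs
  obtain ⟨x0, hx0, hmax⟩ := isCompact_Icc.exists_isMaxOn hne hcont.continuousOn
  set M := |p.eval x0| with hMdef
  have hM0 : 0 ≤ M := abs_nonneg _
  -- evaluation formulas
  have he : ∀ y : ℝ, p.eval y = p.coeff 0 + p.coeff 1 * y + p.coeff 2 * y ^ 2 := by
    intro y
    rw [Polynomial.eval_eq_sum_range' (lt_of_le_of_lt hp (by norm_num : (2:ℕ) < 3))]
    simp only [Finset.sum_range_succ, Finset.sum_range_zero]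
    ring
  have hd2 : p.derivative.natDegree < 2 := by
    have := p.natDegree_derivative_le
    omega
  have hde : ∀ y : ℝ, p.derivative.eval y = p.coeff 1 + 2 * p.coeff 2 * y := by
    intro y
    rw [Polynomial.eval_eq_sum_range' hd2]
    simp only [Finset.sum_range_succ, Finset.sum_range_zero, Polynomial.coeff_derivative]
    push_cast
    ring
  -- bounds on the derivative at the endpoints
  have t1 : |p.eval a| ≤ M := hmax ⟨le_refl _, hU⟩
  have t2 : |p.eval (a + h)| ≤ M := hmax ⟨by linarith, by linarith⟩
  have t3 : |p.eval (a + 2 * h)| ≤ M := hmax ⟨hU, le_refl _⟩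
  have hA : |p.derivative.eval a| ≤ 4 * M / h := by
    have e1 : p.derivative.eval a * (2 * h)
        = -3 * p.eval a + 4 * p.eval (a + h) - p.eval (a + 2 * h) := by
      rw [hde, he, he, he]; ring
    have h8 : |p.derivative.eval a * (2 * h)| ≤ 8 * M := by
      rw [e1, abs_le]
      rw [abs_le] at t1 t2 t3
      constructor <;> linarith [t1.1, t1.2, t2.1, t2.2, t3.1, t3.2]
    rw [abs_mul, abs_of_pos (show (0:ℝ) < 2 * h by linarith)] at h8
    rw [le_div_iff₀ hh]
    nlinarith [abs_nonneg (p.derivative.eval a)]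
  have hB : |p.derivative.eval (a + 2 * h)| ≤ 4 * M / h := by
    have e2 : p.derivative.eval (a + 2 * h) * (2 * h)
        = p.eval a - 4 * p.eval (a + h) + 3 * p.eval (a + 2 * h) := by
      rw [hde, he, he, he]; ring
    have h8 : |p.derivative.eval (a + 2 * h) * (2 * h)| ≤ 8 * M := by
      rw [e2, abs_le]
      rw [abs_le] at t1 t2 t3
      constructor <;> linarith [t1.1, t1.2, t2.1, t2.2, t3.1, t3.2]
    rw [abs_mul, abs_of_pos (show (0:ℝ) < 2 * h by linarith)] at h8
    rw [le_div_iff₀ hh]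
    nlinarith [abs_nonneg (p.derivative.eval (a + 2 * h))]
  -- derivative bound on the whole interval
  have hd : ∀ y ∈ Icc a (a + 2 * h), |p.derivative.eval y| ≤ 4 * M / h := by
    intro y hy
    set l : ℝ := (y - a) / (2 * h) with hl
    have h2h : (0:ℝ) < 2 * h := by linarith
    have hl0 : 0 ≤ l := div_nonneg (by linarith [hy.1]) (le_of_lt h2h)
    have hl1 : l ≤ 1 := by
      rw [hl, div_le_one h2h]; linarith [hy.2]
    have key : l * (2 * h) = y - a := by
      rw [hl]; field_simp
    have hcomb : p.derivative.eval y
        = (1 - l) * p.derivative.eval a + l * p.derivative.eval (a + 2 * h) := by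
      have hid : (1 - l) * (p.coeff 1 + 2 * p.coeff 2 * a)
          + l * (p.coeff 1 + 2 * p.coeff 2 * (a + 2 * h))
          = p.coeff 1 + 2 * p.coeff 2 * (a + l * (2 * h)) := by ring
      rw [hde, hde, hde, hid, key]
      ring
    rw [hcomb]
    calc |(1 - l) * p.derivative.eval a + l * p.derivative.eval (a + 2 * h)|
        ≤ |(1 - l) * p.derivative.eval a| + |l * p.derivative.eval (a + 2 * h)| := abs_add_le _ _
      _ = (1 - l) * |p.derivative.eval a| + l * |p.derivative.eval (a + 2 * h)| := by
          rw [abs_mul, abs_mul, abs_of_nonneg (by linarith : (0:ℝ) ≤ 1 - l), abs_of_nonneg hl0]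
      _ ≤ 4 * M / h := by
          nlinarith [abs_nonneg (p.derivative.eval a), abs_nonneg (p.derivative.eval (a + 2 * h))]
  -- Lipschitz-type bound via the mean value inequality
  have hlip : ∀ t ∈ Icc a (a + 2 * h),
      |p.eval t - p.eval x0| ≤ 4 * M / h * |t - x0| := by
    intro t ht
    have := (convex_Icc a (a + 2 * h)).norm_image_sub_le_of_norm_hasDerivWithin_le
      (f := fun x : ℝ => p.eval x) (f' := fun x : ℝ => p.derivative.eval x)
      (fun x _ => (p.hasDerivAt x).hasDerivWithinAt)
      (fun x hx => by simpa [Real.norm_eq_abs] using hd x hx) hx0 ht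
    simpa [Real.norm_eq_abs] using this
  have hlow : ∀ t ∈ Icc a (a + 2 * h), M - 4 * M / h * |t - x0| ≤ |p.eval t| := by
    intro t ht
    have h1 := hlip t ht
    rw [abs_sub_comm] at h1
    have h3 := abs_sub_abs_le_abs_sub (p.eval x0) (p.eval t)
    have h4 := abs_abs_sub_abs_le_abs_sub (p.eval x0) (p.eval t)
    linarith [hMdef, h1, h3]
  -- integrability
  have hint : IntegrableOn (fun t : ℝ => |p.eval t|) (Icc a (a + 2 * h)) :=
    hcont.continuousOn.integrableOn_Icc
  -- the main integral bound: M * h / 8 ≤ ∫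
  have hmain : M * h / 8 ≤ ∫ t in Icc a (a + 2 * h), |p.eval t| := by
    rcases le_or_gt x0 (a + h) with hcase | hcase
    · -- interval [x0, x0 + h/4]
      set b : ℝ := x0 + h / 4 with hb
      have hx0b : x0 ≤ b := by rw [hb]; linarith
      have hsub : Icc x0 b ⊆ Icc a (a + 2 * h) :=
        Icc_subset_Icc hx0.1 (by rw [hb]; linarith)
      have mono1 : (∫ t in Icc x0 b, |p.eval t|) ≤ ∫ t in Icc a (a + 2 * h), |p.eval t| :=
        setIntegral_mono_set hint
          (Filter.Eventually.of_forall fun t => abs_nonneg _)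
          (HasSubset.Subset.eventuallyLE hsub)
      have mono2 : (∫ t in Icc x0 b, (M - 4 * M / h * (t - x0)))
          ≤ ∫ t in Icc x0 b, |p.eval t| := by
        refine setIntegral_mono_on
          ((by fun_prop : Continuous fun t : ℝ => M - 4 * M / h * (t - x0)).continuousOn.integrableOn_Icc)
          (hint.mono_set hsub) measurableSet_Icc ?_
        intro t ht
        have := hlow t (hsub ht)
        rwa [abs_of_nonneg (by linarith [ht.1] : (0:ℝ) ≤ t - x0)] at this
      have calc3 : (∫ t in Icc x0 b, (M - 4 * M / h * (t - x0))) = M * h / 8 := by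
        rw [MeasureTheory.integral_Icc_eq_integral_Ioc,
          ← intervalIntegral.integral_of_le hx0b]
        have hF : ∀ t ∈ uIcc x0 b, HasDerivAt
            (fun t : ℝ => M * t - 4 * M / h * ((t - x0) ^ 2 / 2))
            (M - 4 * M / h * (t - x0)) t := by
          intro t _
          have h1 : HasDerivAt (fun t : ℝ => M * t) M t := by
            simpa using (hasDerivAt_id t).const_mul M
          have h2 : HasDerivAt (fun y : ℝ => 4 * M / h * ((y - x0) ^ 2 / 2))
              (4 * M / h * (t - x0)) t := by
            have h0 : HasDerivAt (fun y : ℝ => (y - x0) ^ 2) (2 * (t - x0)) t := by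
              simpa using ((hasDerivAt_id t).sub_const x0).fun_pow 2
            have h0' := h0.const_mul (4 * M / h / 2)
            have hfeq : (fun y : ℝ => 4 * M / h / 2 * (y - x0) ^ 2)
                = fun y : ℝ => 4 * M / h * ((y - x0) ^ 2 / 2) := by funext y; ring
            have hdeq : 4 * M / h / 2 * (2 * (t - x0)) = 4 * M / h * (t - x0) := by ring
            rw [hfeq, hdeq] at h0'
            exact h0'
          exact h1.sub h2
        have hInt : IntervalIntegrable (fun t : ℝ => M - 4 * M / h * (t - x0)) volume x0 b :=
          Continuous.intervalIntegrable (by fun_prop) x0 b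
        rw [intervalIntegral.integral_eq_sub_of_hasDerivAt hF hInt]
        rw [hb]
        field_simp
        ring
      linarith
    · -- interval [x0 - h/4, x0]
      set b : ℝ := x0 - h / 4 with hb
      have hx0b : b ≤ x0 := by rw [hb]; linarith
      have hsub : Icc b x0 ⊆ Icc a (a + 2 * h) :=
        Icc_subset_Icc (by rw [hb]; linarith [hx0.1]) hx0.2
      have mono1 : (∫ t in Icc b x0, |p.eval t|) ≤ ∫ t in Icc a (a + 2 * h), |p.eval t| :=
        setIntegral_mono_set hint
          (Filter.Eventually.of_forall fun t => abs_nonneg _)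
          (HasSubset.Subset.eventuallyLE hsub)
      have mono2 : (∫ t in Icc b x0, (M - 4 * M / h * (x0 - t)))
          ≤ ∫ t in Icc b x0, |p.eval t| := by
        refine setIntegral_mono_on
          ((by fun_prop : Continuous fun t : ℝ => M - 4 * M / h * (x0 - t)).continuousOn.integrableOn_Icc)
          (hint.mono_set hsub) measurableSet_Icc ?_
        intro t ht
        have := hlow t (hsub ht)
        rwa [abs_sub_comm, abs_of_nonneg (by linarith [ht.2] : (0:ℝ) ≤ x0 - t)] at this
      have calc3 : (∫ t in Icc b x0, (M - 4 * M / h * (x0 - t))) = M * h / 8 := by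
        rw [MeasureTheory.integral_Icc_eq_integral_Ioc,
          ← intervalIntegral.integral_of_le hx0b]
        have hF : ∀ t ∈ uIcc b x0, HasDerivAt
            (fun t : ℝ => M * t + 4 * M / h * ((x0 - t) ^ 2 / 2))
            (M - 4 * M / h * (x0 - t)) t := by
          intro t _
          have h1 : HasDerivAt (fun t : ℝ => M * t) M t := by
            simpa using (hasDerivAt_id t).const_mul M
          have h2 : HasDerivAt (fun y : ℝ => 4 * M / h * ((x0 - y) ^ 2 / 2))
              (-(4 * M / h * (x0 - t))) t := by
            have h0 : HasDerivAt (fun y : ℝ => (x0 - y) ^ 2) (2 * (x0 - t) * (-1)) t := by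
              simpa using ((hasDerivAt_id t).const_sub x0).fun_pow 2
            have h0' := h0.const_mul (4 * M / h / 2)
            have hfeq : (fun y : ℝ => 4 * M / h / 2 * (x0 - y) ^ 2)
                = fun y : ℝ => 4 * M / h * ((x0 - y) ^ 2 / 2) := by funext y; ring
            have hdeq : 4 * M / h / 2 * (2 * (x0 - t) * (-1)) = -(4 * M / h * (x0 - t)) := by
              ring
            rw [hfeq, hdeq] at h0'
            exact h0'
          have h12 := h1.add h2
          rw [show M - 4 * M / h * (x0 - t) = M + -(4 * M / h * (x0 - t)) by ring]
          exact h12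
        have hInt : IntervalIntegrable (fun t : ℝ => M - 4 * M / h * (x0 - t)) volume b x0 :=
          Continuous.intervalIntegrable (by fun_prop) b x0
        rw [intervalIntegral.integral_eq_sub_of_hasDerivAt hF hInt]
        rw [hb]
        field_simp
        ring
      linarith
  -- conclude
  intro x hx
  have hxM : |p.eval x| ≤ M := hmax hx
  have : M ≤ 8 / h * ∫ t in Icc a (a + 2 * h), |p.eval t| := by
    have h1 : 8 / h * (M * h / 8) ≤ 8 / h * ∫ t in Icc a (a + 2 * h), |p.eval t| :=
      mul_le_mul_of_nonneg_left hmain (by positivity)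
    have h2 : 8 / h * (M * h / 8) = M := by field_simp
    linarith
  linarith
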